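/- Let n ≥ 1 and let ξ₁,…,ξₙ be i.i.d. uniform random variables on [0,1] with order statistics ξ₍₁₎ ≤ … ≤ ξ₍ₙ₎. For every δ ∈ (0,1] with log(4n/δ) ≤ n/4, with probability at least 1 − δ/2 one has max_{1≤i≤n} |ξ₍ᵢ₎ − i/n| ≤ 2·√(log(4n/δ)/n). -/

import Mathlib

open MeasureTheory
open scoped ENNReal

/-- The uniform probability measure on `[0,1]`. -/
noncomputable def unif01 : Measure ℝ := volume.restrict (Set.Icc (0:ℝ) 1)

/-- Law of `n` i.i.d. uniform random variables on `[0,1]`. -/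
noncomputable def Pxi (n : ℕ) : Measure (Fin n → ℝ) := Measure.pi fun _ => unif01

/-- The canonical probability space of the graphon sampling model: the first coordinate
carries the `n` i.i.d. uniform sample points, the second coordinate carries an independent
array of i.i.d. uniform variables used to generate the Bernoulli edge indicators. -/
noncomputable def Pg (n : ℕ) : Measure ((Fin n → ℝ) × (Fin n → Fin n → ℝ)) :=
  (Pxi n).prod (Measure.pi fun _ : Fin n => Measure.pi fun _ : Fin n => unif01)

/-- The order statistics of `ξ`: `sortedVec ξ i` is the `(i+1)`-st smallest value of `ξ`. -/
noncomputable def sortedVec {n : ℕ} (ξ : Fin n → ℝ) : Fin n → ℝ := ξ ∘ ⇑(Tuple.sort ξ)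

/-- The weight matrix `Q` with `Q i j = ρ · W(ξ₍ᵢ₎, ξ₍ⱼ₎)` (order statistics of `ξ`). -/
noncomputable def Qmat (n : ℕ) (W : ℝ → ℝ → ℝ) (ρ : ℝ) (ξ : Fin n → ℝ) :
    Matrix (Fin n) (Fin n) ℝ :=
  Matrix.of fun i j => ρ * W (sortedVec ξ i) (sortedVec ξ j)

/-- The adjacency matrix sampled from the graphon model: given the uniforms `ω.2`,
`A i j = 1` iff `ω.2 i j ≤ Q i j` (for `i < j`, symmetrized, zero diagonal), so that
conditionally on `ξ = ω.1` the entries `A i j`, `i < j`, are independent `Bernoulli (Q i j)`. -/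
noncomputable def Amat (n : ℕ) (W : ℝ → ℝ → ℝ) (ρ : ℝ)
    (ω : (Fin n → ℝ) × (Fin n → Fin n → ℝ)) : Matrix (Fin n) (Fin n) ℝ :=
  Matrix.of fun i j =>
    if i = j then 0
    else if i < j then (if ω.2 i j ≤ Qmat n W ρ ω.1 i j then 1 else 0)
    else (if ω.2 j i ≤ Qmat n W ρ ω.1 j i then 1 else 0)

/-- The number of singular values of `M` (square roots of eigenvalues of `Mᵀ M`,
counted with multiplicity) that are `≥ t`. -/
noncomputable def svCount {n : ℕ} (M : Matrix (Fin n) (Fin n) ℝ) (t : ℝ) : ℕ :=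
  (Finset.univ.filter fun i : Fin n =>
    t ≤ Real.sqrt (((by have h := Matrix.isHermitian_conjTranspose_mul_self M; rwa [Matrix.conjTranspose_eq_transpose_of_trivial] at h) : (M.transpose * M).IsHermitian).eigenvalues i)).card


instance : IsProbabilityMeasure unif01 := ⟨by
  simp [unif01, Real.volume_Icc]⟩

instance (n : ℕ) : IsProbabilityMeasure (Pxi n) := by
  unfold Pxi; infer_instance

lemma unif01_integral_ite (c t : ℝ) (h0 : 0 ≤ t) (h1 : t ≤ 1) :
    ∫ x, (if x ≤ t then Real.exp c else 1) ∂unif01 = 1 + t * (Real.exp c - 1) := by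
  have hd : Disjoint (Set.Icc (0:ℝ) t) (Set.Ioc t 1) := by
    rw [Set.disjoint_left]; rintro x ⟨-, hx2⟩ ⟨hx3, -⟩; exact absurd hx2 (not_le.2 hx3)
  have hcup : Set.Icc (0:ℝ) t ∪ Set.Ioc t 1 = Set.Icc 0 1 := Set.Icc_union_Ioc_eq_Icc h0 h1
  have he1 : Set.EqOn (fun x : ℝ => if x ≤ t then Real.exp c else 1) (fun _ => Real.exp c)
      (Set.Icc 0 t) := fun x hx => by simp [hx.2]
  have he2 : Set.EqOn (fun x : ℝ => if x ≤ t then Real.exp c else 1) (fun _ => (1:ℝ))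
      (Set.Ioc t 1) := fun x hx => by simp [not_le.2 hx.1]
  have hi1 : IntegrableOn (fun x : ℝ => if x ≤ t then Real.exp c else 1) (Set.Icc 0 t) :=
    (integrableOn_const measure_Icc_lt_top.ne).congr_fun he1.symm measurableSet_Icc
  have hi2 : IntegrableOn (fun x : ℝ => if x ≤ t then Real.exp c else 1) (Set.Ioc t 1) :=
    (integrableOn_const measure_Ioc_lt_top.ne).congr_fun he2.symm measurableSet_Ioc
  have : ∫ x, (if x ≤ t then Real.exp c else 1) ∂unif01
      = (∫ x in Set.Icc 0 t, (if x ≤ t then Real.exp c else 1))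
        + ∫ x in Set.Ioc t 1, (if x ≤ t then Real.exp c else 1) := by
    rw [unif01, ← hcup, setIntegral_union hd measurableSet_Ioc hi1 hi2]
  rw [this, setIntegral_congr_fun measurableSet_Icc he1, setIntegral_congr_fun measurableSet_Ioc he2,
    setIntegral_const, setIntegral_const, measureReal_def, measureReal_def, Real.volume_Icc, Real.volume_Ioc,
    ENNReal.toReal_ofReal (by linarith), ENNReal.toReal_ofReal (by linarith)]
  simp [smul_eq_mul]; ring

lemma pxi_prod_integral (n : ℕ) (g : ℝ → ℝ) :
    ∫ ξ, ∏ j, g (ξ j) ∂(Pxi n) = (∫ x, g x ∂unif01) ^ n := by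
  letI : MeasureSpace ℝ := ⟨unif01⟩
  haveI : SigmaFinite (volume : Measure ℝ) := by
    show SigmaFinite unif01; infer_instance
  have := MeasureTheory.integral_fintype_prod_eq_pow (𝕜 := ℝ) (ι := Fin n) g (μ := unif01)
  simpa [Pxi, Fintype.card_fin] using this

section tails

variable {n : ℕ}

noncomputable def Ncnt (n : ℕ) (t : ℝ) (ξ : Fin n → ℝ) : ℝ :=
  ∑ j, (if ξ j ≤ t then (1:ℝ) else 0)

lemma Ncnt_eq_card (t : ℝ) (ξ : Fin n → ℝ) :
    Ncnt n t ξ = ((Finset.univ.filter fun j => ξ j ≤ t).card : ℝ) := by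
  simp [Ncnt, Finset.sum_boole]

lemma Ncnt_measurable (t : ℝ) : Measurable (Ncnt n t) := by
  apply Finset.measurable_sum
  intro j _
  exact Measurable.ite (measurableSet_le (measurable_pi_apply j) measurable_const)
    measurable_const measurable_const

lemma Ncnt_nonneg (t : ℝ) (ξ : Fin n → ℝ) : 0 ≤ Ncnt n t ξ :=
  Finset.sum_nonneg fun j _ => by positivity

lemma Ncnt_le (t : ℝ) (ξ : Fin n → ℝ) : Ncnt n t ξ ≤ n := by
  rw [Ncnt]
  calc ∑ j, (if ξ j ≤ t then (1:ℝ) else 0) ≤ ∑ _j : Fin n, (1:ℝ) :=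
        Finset.sum_le_sum fun j _ => by split <;> norm_num
    _ = n := by simp

lemma integrable_exp_Ncnt (c t : ℝ) :
    Integrable (fun ξ => Real.exp (c * Ncnt n t ξ)) (Pxi n) := by
  refine Integrable.mono' (integrable_const (Real.exp (|c| * n))) ?_ ?_
  · exact (((Ncnt_measurable t).const_mul c).exp).aestronglyMeasurable
  · refine Filter.Eventually.of_forall fun ξ => ?_
    rw [Real.norm_eq_abs, abs_of_pos (Real.exp_pos _), Real.exp_le_exp]
    calc c * Ncnt n t ξ ≤ |c| * Ncnt n t ξ :=
          mul_le_mul_of_nonneg_right (le_abs_self c) (Ncnt_nonneg t ξ)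
      _ ≤ |c| * n := mul_le_mul_of_nonneg_left (Ncnt_le t ξ) (abs_nonneg c)

lemma mgf_Ncnt (c t : ℝ) (h0 : 0 ≤ t) (h1 : t ≤ 1) :
    ∫ ξ, Real.exp (c * Ncnt n t ξ) ∂(Pxi n) = (1 + t * (Real.exp c - 1)) ^ n := by
  have : ∀ ξ : Fin n → ℝ, Real.exp (c * Ncnt n t ξ)
      = ∏ j, (if ξ j ≤ t then Real.exp c else 1) := by
    intro ξ
    rw [Ncnt, Finset.mul_sum, Real.exp_sum]
    congr 1; ext j
    split <;> simp
  simp_rw [this]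
  rw [pxi_prod_integral n (fun x => if x ≤ t then Real.exp c else 1),
    unif01_integral_ite c t h0 h1]

lemma tail_ge (t : ℝ) (h0 : 0 ≤ t) (h1 : t ≤ 1) (m : ℕ) (c : ℝ) (hc : 0 ≤ c) :
    Pxi n {ξ | m ≤ (Finset.univ.filter fun j => ξ j ≤ t).card} ≤
      ENNReal.ofReal (Real.exp (-c * m) * (1 + t * (Real.exp c - 1)) ^ n) := by
  have hset : {ξ : Fin n → ℝ | m ≤ (Finset.univ.filter fun j => ξ j ≤ t).card}
      = {ξ | (m : ℝ) ≤ Ncnt n t ξ} := by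
    ext ξ; simp [Ncnt_eq_card, Nat.cast_le]
  have h := ProbabilityTheory.measure_ge_le_exp_mul_mgf (X := Ncnt n t) (μ := Pxi n)
    (m : ℝ) hc (integrable_exp_Ncnt c t)
  rw [ProbabilityTheory.mgf, mgf_Ncnt c t h0 h1] at h
  rw [hset]
  refine (ENNReal.le_ofReal_iff_toReal_le (measure_ne_top _ _) ?_).2 h
  have hb : (0:ℝ) ≤ 1 + t * (Real.exp c - 1) := by nlinarith [Real.exp_pos c, Real.exp_le_exp.2 (neg_nonpos.2 hc), Real.exp_zero, Real.one_le_exp hc]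
  positivity

lemma tail_le (t : ℝ) (h0 : 0 ≤ t) (h1 : t ≤ 1) (m : ℕ) (c : ℝ) (hc : 0 ≤ c) :
    Pxi n {ξ | (Finset.univ.filter fun j => ξ j ≤ t).card ≤ m} ≤
      ENNReal.ofReal (Real.exp (c * m) * (1 + t * (Real.exp (-c) - 1)) ^ n) := by
  have hset : {ξ : Fin n → ℝ | (Finset.univ.filter fun j => ξ j ≤ t).card ≤ m}
      = {ξ | (-m : ℝ) ≤ (fun ξ => -Ncnt n t ξ) ξ} := by
    ext ξ; simp [Ncnt_eq_card, neg_le_neg_iff, Nat.cast_le]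
  have hint : Integrable (fun ξ => Real.exp (c * (-Ncnt n t ξ))) (Pxi n) := by
    simpa [neg_mul, mul_neg, mul_comm] using integrable_exp_Ncnt (-c) t
  have h := ProbabilityTheory.measure_ge_le_exp_mul_mgf (X := fun ξ => -Ncnt n t ξ)
    (μ := Pxi n) (-(m : ℝ)) hc hint
  have hmgf : ProbabilityTheory.mgf (fun ξ => -Ncnt n t ξ) (Pxi n) c
      = (1 + t * (Real.exp (-c) - 1)) ^ n := by
    rw [ProbabilityTheory.mgf, ← mgf_Ncnt (-c) t h0 h1]
    congr 1; ext ξ; ring_nf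
  rw [hmgf] at h
  rw [hset]
  have hexp : Real.exp (-c * -(m:ℝ)) = Real.exp (c * m) := by ring_nf
  rw [hexp] at h
  refine (ENNReal.le_ofReal_iff_toReal_le (measure_ne_top _ _) ?_).2 h
  have hb : (0:ℝ) ≤ 1 + t * (Real.exp (-c) - 1) := by
    nlinarith [Real.exp_pos (-c), Real.exp_le_exp.2 (neg_nonpos.2 hc), Real.exp_zero]
  positivity

end tails


lemma sortedVec_le_iff {n : ℕ} (ξ : Fin n → ℝ) (i : Fin n) (a : ℝ) :
    sortedVec ξ i ≤ a ↔ (i : ℕ) < (Finset.univ.filter fun j => ξ j ≤ a).card := by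
  classical
  have h := Tuple.lt_card_le_iff_apply_le_of_monotone (f := ξ ∘ ⇑(Tuple.sort ξ)) (a := a)
    (j := i) (Tuple.monotone_sort ξ)
  rw [← Fintype.card_subtype] at h
  have hcard : Fintype.card {k // (ξ ∘ ⇑(Tuple.sort ξ)) k ≤ a}
      = (Finset.univ.filter fun j => ξ j ≤ a).card := by
    rw [Fintype.card_congr (((Tuple.sort ξ).subtypeEquiv (fun k => Iff.rfl)) :
      {k // (ξ ∘ ⇑(Tuple.sort ξ)) k ≤ a} ≃ {j // ξ j ≤ a})]
    rw [Fintype.card_subtype]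
  rw [sortedVec, ← h, hcard]

lemma coord_mem_null {n : ℕ} (j : Fin n) (s : Set ℝ) (hs : MeasurableSet s)
    (h : unif01 s = 0) : Pxi n {ξ | ξ j ∈ s} = 0 := by
  classical
  have hset : {ξ : Fin n → ℝ | ξ j ∈ s}
      = Set.pi Set.univ (Function.update (fun _ : Fin n => (Set.univ : Set ℝ)) j s) := by
    ext ξ
    simp only [Set.mem_setOf_eq, Set.mem_pi, Set.mem_univ, true_implies]
    constructor
    · intro hm k
      rcases eq_or_ne k j with rfl | hk
      · simpa using hm
      · simp [Function.update_apply, hk]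
    · intro hm
      have := hm j
      simpa using this
  rw [hset, Pxi, Measure.pi_pi]
  refine Finset.prod_eq_zero (Finset.mem_univ j) ?_
  simp [h]

lemma unif01_Ioi_one : unif01 (Set.Ioi 1) = 0 := by
  rw [unif01, Measure.restrict_apply measurableSet_Ioi]
  convert measure_empty (μ := (volume : Measure ℝ))
  ext x
  simp only [Set.mem_inter_iff, Set.mem_Ioi, Set.mem_Icc, Set.mem_empty_iff_false, iff_false]
  rintro ⟨h1, -, h2⟩; linarith

lemma unif01_Iio_zero : unif01 (Set.Iio 0) = 0 := by
  rw [unif01, Measure.restrict_apply measurableSet_Iio]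
  convert measure_empty (μ := (volume : Measure ℝ))
  ext x
  simp only [Set.mem_inter_iff, Set.mem_Iio, Set.mem_Icc, Set.mem_empty_iff_false, iff_false]
  rintro ⟨h1, h2, -⟩; linarith

lemma sorted_big_null {n : ℕ} (i : Fin n) :
    Pxi n {ξ | 1 < sortedVec ξ i} = 0 := by
  have hsub : {ξ : Fin n → ℝ | 1 < sortedVec ξ i} ⊆ ⋃ j, {ξ | ξ j ∈ Set.Ioi 1} := by
    intro ξ hξ
    exact Set.mem_iUnion.2 ⟨Tuple.sort ξ i, hξ⟩
  refine le_antisymm ?_ (zero_le)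
  refine le_trans (measure_mono hsub) ?_
  refine le_trans (measure_iUnion_le _) ?_
  have : ∀ j : Fin n, Pxi n {ξ | ξ j ∈ Set.Ioi 1} = 0 :=
    fun j => coord_mem_null j _ measurableSet_Ioi unif01_Ioi_one
  simp only [Set.mem_Ioi] at this
  simp [this]

lemma sorted_small_null {n : ℕ} (i : Fin n) :
    Pxi n {ξ | sortedVec ξ i < 0} = 0 := by
  have hsub : {ξ : Fin n → ℝ | sortedVec ξ i < 0} ⊆ ⋃ j, {ξ | ξ j ∈ Set.Iio 0} := by
    intro ξ hξ
    exact Set.mem_iUnion.2 ⟨Tuple.sort ξ i, hξ⟩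
  refine le_antisymm ?_ (zero_le)
  refine le_trans (measure_mono hsub) ?_
  refine le_trans (measure_iUnion_le _) ?_
  have : ∀ j : Fin n, Pxi n {ξ | ξ j ∈ Set.Iio 0} = 0 :=
    fun j => coord_mem_null j _ measurableSet_Iio unif01_Iio_zero
  simp only [Set.mem_Iio] at this
  simp [this]


lemma exp_neg_bound3 {x : ℝ} (h0 : 0 ≤ x) (h1 : x ≤ 1) :
    Real.exp (-x) ≤ 1 - x + x^2/2 + (2/9)*x^3 := by
  have hb := Real.exp_bound (x := -x) (by rwa [abs_neg, abs_of_nonneg h0]) (n := 3) (by norm_num)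
  rw [abs_neg, abs_of_nonneg h0] at hb
  have hs : ∑ m ∈ Finset.range 3, (-x) ^ m / (m.factorial : ℝ) = 1 - x + x^2/2 := by
    simp [Finset.sum_range_succ, Nat.factorial]
    ring
  rw [hs] at hb
  have := (abs_sub_le_iff.1 hb).1
  norm_num [Nat.factorial] at this
  nlinarith [pow_nonneg h0 3]

lemma exp_bound2 {x : ℝ} (h0 : 0 ≤ x) (h1 : x ≤ 1) :
    Real.exp x ≤ 1 + x + (3/4)*x^2 := by
  have hb := Real.exp_bound (x := x) (by rwa [abs_of_nonneg h0]) (n := 2) (by norm_num)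
  rw [abs_of_nonneg h0] at hb
  have hs : ∑ m ∈ Finset.range 2, x ^ m / (m.factorial : ℝ) = 1 + x := by
    simp [Finset.sum_range_succ, Nat.factorial]
  rw [hs] at hb
  have := (abs_sub_le_iff.1 hb).1
  norm_num [Nat.factorial] at this
  nlinarith [pow_nonneg h0 2]

lemma core_upper (nR lam K : ℝ) (hK : 0 ≤ K) (hn1 : 1 ≤ nR) (hlam : 0 < lam)
    (hlam2 : lam ≤ 1/2) (hle : K + 1 + 2*nR*lam ≤ nR) :
    lam*K + (K+1+2*nR*lam)*(Real.exp (-lam) - 1) ≤ -(nR*lam^2) := by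
  have he := exp_neg_bound3 hlam.le (by linarith)
  have hnt : 0 ≤ K + 1 + 2*nR*lam := by positivity
  have h1 : (K+1+2*nR*lam)*(Real.exp (-lam) - 1)
      ≤ (K+1+2*nR*lam)*(-lam + lam^2/2 + (2/9)*lam^3) :=
    mul_le_mul_of_nonneg_left (by linarith) hnt
  nlinarith [mul_nonneg (mul_nonneg (by linarith : (0:ℝ) ≤ nR) (sq_nonneg lam)) hlam.le,
    mul_nonneg (sq_nonneg lam) hlam.le,
    mul_le_mul_of_nonneg_right hle (sq_nonneg lam),
    mul_le_mul_of_nonneg_right hle (mul_nonneg (sq_nonneg lam) hlam.le),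
    mul_nonneg (mul_nonneg hnt (sq_nonneg lam)) (by linarith : (0:ℝ) ≤ 1/2 - lam)]

lemma core_lower (nR lam K : ℝ) (hK : 0 ≤ K) (hKn : K + 1 ≤ nR) (hlam : 0 < lam)
    (hlam2 : lam ≤ 1/2) (hnt : 0 ≤ K + 1 - 2*nR*lam) :
    -(lam*(K+1)) + (K+1-2*nR*lam)*(Real.exp lam - 1) ≤ -(nR*lam^2) := by
  have he := exp_bound2 hlam.le (by linarith)
  have h1 : (K+1-2*nR*lam)*(Real.exp lam - 1)
      ≤ (K+1-2*nR*lam)*(lam + (3/4)*lam^2) :=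
    mul_le_mul_of_nonneg_left (by linarith) hnt
  nlinarith [mul_le_mul_of_nonneg_right hKn (sq_nonneg lam),
    mul_nonneg (mul_nonneg (by linarith : (0:ℝ) ≤ nR) (sq_nonneg lam)) hlam.le]

set_option maxHeartbeats 1000000 in
/-- uniform concentration of the order statistics of `n` i.i.d. uniforms:
with probability at least `1 − δ/2`, `max_i |ξ₍ᵢ₎ − i/n| ≤ 2√(log(4n/δ)/n)`. -/
theorem stmt12 (n : ℕ) (hn : 1 ≤ n) (δ : ℝ) (hδ : δ ∈ Set.Ioc (0:ℝ) 1)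
    (hlog : Real.log (4 * n / δ) ≤ n / 4) :
    ENNReal.ofReal (1 - δ / 2) ≤
      Pxi n {ξv | ∀ i : Fin n,
        |sortedVec ξv i - ((i : ℕ) + 1 : ℝ) / n| ≤
          2 * Real.sqrt (Real.log (4 * n / δ) / n)} := by
  obtain ⟨hδ0, hδ1⟩ := hδ
  have hn1 : (1:ℝ) ≤ (n:ℝ) := by exact_mod_cast hn
  have hn0 : (0:ℝ) < n := by linarith
  set L := Real.log (4 * n / δ) with hLdef
  set lam := Real.sqrt (L / n) with hlamdef
  have hx : (0:ℝ) < 4*n/δ := by positivity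
  have h4 : (4:ℝ) ≤ 4*n/δ := by
    rw [le_div_iff₀ hδ0]; nlinarith
  have hL1 : 1 ≤ L := by
    have hl4 : Real.log 4 ≤ L := Real.log_le_log (by norm_num) h4
    have h24 : Real.log 4 = 2 * Real.log 2 := by
      rw [show (4:ℝ) = 2^2 by norm_num, Real.log_pow]; push_cast; ring
    have := Real.log_two_gt_d9
    linarith
  have hLn : 0 < L / n := by positivity
  have hsq : lam^2 = L/n := Real.sq_sqrt hLn.le
  have hlam0 : 0 < lam := Real.sqrt_pos.2 hLn
  have hlamhalf : lam ≤ 1/2 := by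
    rw [hlamdef, show (1:ℝ)/2 = Real.sqrt ((1/2)^2) from (Real.sqrt_sq (by norm_num)).symm]
    apply Real.sqrt_le_sqrt
    rw [div_le_iff₀ hn0]
    nlinarith
  have hnl : (n:ℝ) * lam^2 = L := by rw [hsq]; field_simp
  have hB : Real.exp (-L) = δ/(4*n) := by
    rw [Real.exp_neg, Real.exp_log hx, inv_div]
  have heps : 2 * Real.sqrt (L / n) = 2 * lam := rfl
  -- upper deviation bound
  have hU : ∀ i : Fin n,
      Pxi n {ξ | ((i:ℕ)+1:ℝ)/n + 2*lam < sortedVec ξ i} ≤ ENNReal.ofReal (δ/(4*n)) := by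
    intro i
    set t : ℝ := ((i:ℕ)+1:ℝ)/n + 2*lam with htdef
    by_cases hcase : t ≤ 1
    · have h0t : 0 ≤ t := by positivity
      have hsub : {ξ : Fin n → ℝ | t < sortedVec ξ i}
          ⊆ {ξ | (Finset.univ.filter fun j => ξ j ≤ t).card ≤ (i:ℕ)} := by
        intro ξ hξ
        simp only [Set.mem_setOf_eq] at *
        by_contra hcc
        exact absurd ((sortedVec_le_iff ξ i t).2 (Nat.lt_of_not_le hcc)) (not_le.2 hξ)
      refine le_trans (measure_mono hsub) (le_trans (tail_le t h0t hcase i lam hlam0.le) ?_)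
      apply ENNReal.ofReal_le_ofReal
      set u := Real.exp (-lam) with hudef
      have hu1 : u ≤ 1 := Real.exp_le_one_iff.2 (by linarith)
      have hu0 : 0 < u := Real.exp_pos _
      have hb0 : (0:ℝ) ≤ 1 + t * (u - 1) := by nlinarith
      have h2 : (1 + t*(u-1))^n ≤ Real.exp ((n:ℝ) * (t*(u-1))) := by
        calc (1 + t*(u-1))^n ≤ (Real.exp (t*(u-1)))^n := by
              apply pow_le_pow_left₀ hb0
              linarith [Real.add_one_le_exp (t*(u-1))]
          _ = Real.exp ((n:ℝ) * (t*(u-1))) := (Real.exp_nat_mul _ n).symm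
      have hnt : (n:ℝ)*t = ((i:ℕ)+1) + 2*(n:ℝ)*lam := by
        rw [htdef]; field_simp
      have hle : ((i:ℕ):ℝ) + 1 + 2*(n:ℝ)*lam ≤ (n:ℝ) := by
        have : (n:ℝ)*t ≤ n := by nlinarith
        linarith [hnt ▸ this]
      have hcore := core_upper (n:ℝ) lam ((i:ℕ):ℝ) (Nat.cast_nonneg _) hn1 hlam0 hlamhalf hle
      calc Real.exp (lam * (i:ℕ)) * (1 + t * (u - 1)) ^ n
          ≤ Real.exp (lam * (i:ℕ)) * Real.exp ((n:ℝ) * (t*(u-1))) := by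
            exact mul_le_mul_of_nonneg_left h2 (Real.exp_pos _).le
        _ = Real.exp (lam * (i:ℕ) + (n:ℝ) * (t*(u-1))) := (Real.exp_add _ _).symm
        _ ≤ Real.exp (-L) := by
            apply Real.exp_le_exp.2
            have : (n:ℝ) * (t*(u-1)) = ((n:ℝ)*t) * (u-1) := by ring
            rw [this, hnt, ← hnl]
            calc lam * (i:ℕ) + (((i:ℕ):ℝ)+1+2*(n:ℝ)*lam) * (u - 1) ≤ -((n:ℝ)*lam^2) :=
              hcore
              _ = -((n:ℝ)*lam^2) := rfl
        _ = δ/(4*n) := hB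
    · push_neg at hcase
      have hsub : {ξ : Fin n → ℝ | t < sortedVec ξ i} ⊆ {ξ | 1 < sortedVec ξ i} :=
        fun ξ hξ => lt_trans hcase hξ
      refine le_trans (measure_mono hsub) ?_
      rw [sorted_big_null i]
      exact zero_le
  -- lower deviation bound
  have hLo : ∀ i : Fin n,
      Pxi n {ξ | sortedVec ξ i < ((i:ℕ)+1:ℝ)/n - 2*lam} ≤ ENNReal.ofReal (δ/(4*n)) := by
    intro i
    set t : ℝ := ((i:ℕ)+1:ℝ)/n - 2*lam with htdef
    by_cases hcase : 0 ≤ t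
    · have hi1n : ((i:ℕ):ℝ) + 1 ≤ (n:ℝ) := by exact_mod_cast i.isLt
      have ht1 : t ≤ 1 := by
        rw [htdef]
        have : ((i:ℕ)+1:ℝ)/n ≤ 1 := by rw [div_le_one hn0]; exact hi1n
        linarith
      have hsub : {ξ : Fin n → ℝ | sortedVec ξ i < t}
          ⊆ {ξ | (i:ℕ)+1 ≤ (Finset.univ.filter fun j => ξ j ≤ t).card} := by
        intro ξ hξ
        simp only [Set.mem_setOf_eq] at *
        exact Nat.succ_le_of_lt ((sortedVec_le_iff ξ i t).1 hξ.le)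
      refine le_trans (measure_mono hsub)
        (le_trans (tail_ge t hcase ht1 ((i:ℕ)+1) lam hlam0.le) ?_)
      apply ENNReal.ofReal_le_ofReal
      set v := Real.exp lam with hvdef
      have hv1 : 1 ≤ v := Real.one_le_exp hlam0.le
      have hb0 : (0:ℝ) ≤ 1 + t * (v - 1) := by nlinarith
      have h2 : (1 + t*(v-1))^n ≤ Real.exp ((n:ℝ) * (t*(v-1))) := by
        calc (1 + t*(v-1))^n ≤ (Real.exp (t*(v-1)))^n := by
              apply pow_le_pow_left₀ hb0
              linarith [Real.add_one_le_exp (t*(v-1))]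
          _ = Real.exp ((n:ℝ) * (t*(v-1))) := (Real.exp_nat_mul _ n).symm
      have hnt : (n:ℝ)*t = (((i:ℕ):ℝ)+1) - 2*(n:ℝ)*lam := by
        rw [htdef]; field_simp
      have hnt0 : 0 ≤ ((i:ℕ):ℝ) + 1 - 2*(n:ℝ)*lam := by
        have : 0 ≤ (n:ℝ)*t := by positivity
        linarith [hnt ▸ this]
      have hcore := core_lower (n:ℝ) lam ((i:ℕ):ℝ) (Nat.cast_nonneg _) hi1n hlam0 hlamhalf hnt0
      have hcast : ((((i:ℕ)+1 : ℕ)):ℝ) = ((i:ℕ):ℝ) + 1 := by push_cast; ring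
      calc Real.exp (-lam * (((i:ℕ)+1 : ℕ):ℝ)) * (1 + t * (v - 1)) ^ n
          ≤ Real.exp (-lam * (((i:ℕ)+1 : ℕ):ℝ)) * Real.exp ((n:ℝ) * (t*(v-1))) :=
            mul_le_mul_of_nonneg_left h2 (Real.exp_pos _).le
        _ = Real.exp (-lam * (((i:ℕ)+1 : ℕ):ℝ) + (n:ℝ) * (t*(v-1))) := (Real.exp_add _ _).symm
        _ ≤ Real.exp (-L) := by
            apply Real.exp_le_exp.2
            have hrw : (n:ℝ) * (t*(v-1)) = ((n:ℝ)*t) * (v-1) := by ring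
            rw [hrw, hnt, hcast, ← hnl]
            have : -lam * (((i:ℕ):ℝ)+1) = -(lam * (((i:ℕ):ℝ)+1)) := by ring
            rw [this]
            exact hcore
        _ = δ/(4*n) := hB
    · push_neg at hcase
      have hsub : {ξ : Fin n → ℝ | sortedVec ξ i < t} ⊆ {ξ | sortedVec ξ i < 0} :=
        fun ξ hξ => lt_trans hξ hcase
      refine le_trans (measure_mono hsub) ?_
      rw [sorted_small_null i]
      exact zero_le
  -- assemble
  set G : Set (Fin n → ℝ) := {ξv | ∀ i : Fin n,
    |sortedVec ξv i - ((i : ℕ) + 1 : ℝ) / n| ≤ 2 * Real.sqrt (L / n)} with hGdef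
  have hbadsub : Gᶜ ⊆ ⋃ i : Fin n,
      ({ξ | ((i:ℕ)+1:ℝ)/n + 2*lam < sortedVec ξ i}
        ∪ {ξ | sortedVec ξ i < ((i:ℕ)+1:ℝ)/n - 2*lam}) := by
    intro ξ hξ
    simp only [hGdef, Set.mem_compl_iff, Set.mem_setOf_eq, not_forall] at hξ
    obtain ⟨i, hi⟩ := hξ
    rw [heps] at hi
    have habs := lt_of_not_ge hi
    refine Set.mem_iUnion.2 ⟨i, ?_⟩
    rcases lt_abs.1 habs with h | h
    · left; simp only [Set.mem_setOf_eq]; linarith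
    · right; simp only [Set.mem_setOf_eq]; linarith
  have hbad : Pxi n Gᶜ ≤ ENNReal.ofReal (δ/2) := by
    refine le_trans (measure_mono hbadsub) (le_trans (measure_iUnion_le _) ?_)
    have hstep : ∀ i : Fin n,
        Pxi n ({ξ | ((i:ℕ)+1:ℝ)/n + 2*lam < sortedVec ξ i}
          ∪ {ξ | sortedVec ξ i < ((i:ℕ)+1:ℝ)/n - 2*lam})
        ≤ ENNReal.ofReal (δ/(4*n)) + ENNReal.ofReal (δ/(4*n)) := fun i =>
      le_trans (measure_union_le _ _) (add_le_add (hU i) (hLo i))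
    refine le_trans (ENNReal.tsum_le_tsum hstep) ?_
    rw [tsum_fintype]
    rw [Finset.sum_const, Finset.card_univ, Fintype.card_fin, nsmul_eq_mul,
      ← ENNReal.ofReal_add (by positivity) (by positivity),
      ← ENNReal.ofReal_natCast, ← ENNReal.ofReal_mul (Nat.cast_nonneg _)]
    apply ENNReal.ofReal_le_ofReal
    rw [show (n:ℝ) * (δ/(4*n) + δ/(4*n)) = δ/2 by field_simp; ring]
  have h1 : (1:ℝ≥0∞) ≤ Pxi n G + ENNReal.ofReal (δ/2) := by
    calc (1:ℝ≥0∞) = Pxi n Set.univ := (measure_univ).symm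
      _ = Pxi n (G ∪ Gᶜ) := by rw [Set.union_compl_self]
      _ ≤ Pxi n G + Pxi n Gᶜ := measure_union_le _ _
      _ ≤ Pxi n G + ENNReal.ofReal (δ/2) := add_le_add_right hbad _
  have hkey : ENNReal.ofReal (1 - δ/2) + ENNReal.ofReal (δ/2)
      ≤ Pxi n G + ENNReal.ofReal (δ/2) := by
    rw [← ENNReal.ofReal_add (by linarith) (by linarith)]
    calc ENNReal.ofReal (1 - δ/2 + δ/2) = 1 := by norm_num
      _ ≤ _ := h1
  exact (ENNReal.add_le_add_iff_right ENNReal.ofReal_ne_top).1 hkey
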